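/- Let p be a prime, a ∈ ℤ, and k, d ≥ 1 integers, and let s_1,…,s_d ≥ 1. Then in ℚ_p: ζ_{f^{k;a}}(s_d,…,s_1) = ∑_{l_1,…,l_d ≥ 0} (∏_{i=1}^d binom(−s_i, l_i)·a^{l_i}) · ζ_{f^{k;0}}(s_d+l_d,…,s_1+l_1), the family on the right being summable in ℚ_p (here a^0 = 1 even for a = 0). -/

import Mathlib

open Finset

/-- The generalized binomial coefficient `binom(−s,l) = (−1)^l · C(s+l−1, l) ∈ ℤ`. -/
def negBinom (s l : ℕ) : ℤ := (-1) ^ l * (Nat.choose (s + l - 1) l : ℤ)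

/-- The multiple harmonic sum `H_{M<N}(s_d,…,s_1) = ∑_{M<n_1<⋯<n_d<N} 1/(n_1^{s_1}⋯n_d^{s_d})`,
viewed in `ℚ_p`; the index `n_i` is paired with the exponent `s_i`. -/
noncomputable def mhs (p : ℕ) [Fact p.Prime] {d : ℕ} (M N : ℤ) (s : Fin d → ℕ) : ℚ_[p] :=
  ∑ n ∈ (Fintype.piFinset fun _ : Fin d => Finset.Ioo M N).filter
      (fun n => ∀ i j : Fin d, i < j → n i < n j),
    ∏ i, 1 / (n i : ℚ_[p]) ^ s i

/-- The finite multiple zeta value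
`ζ_{f^{k;a}}(s_d,…,s_1) = (p^k)^{s_1+⋯+s_d} · H_{ap^k<(a+1)p^k}(s_d,…,s_1) ∈ ℚ_p`. -/
noncomputable def zetaf (p : ℕ) [Fact p.Prime] (k : ℕ) (a : ℤ) {d : ℕ} (s : Fin d → ℕ) :
    ℚ_[p] :=
  ((p : ℚ_[p]) ^ k) ^ (∑ i, s i) * mhs p (a * (p : ℤ) ^ k) ((a + 1) * (p : ℤ) ^ k) s

lemma negBinom_one (m : ℕ) : negBinom 1 m = (-1) ^ m := by
  simp [negBinom, Nat.add_sub_cancel_left]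

lemma choose_hockey (s n : ℕ) :
    ∑ l ∈ range (n + 1), (s + l - 1).choose l = (s + n).choose n := by
  cases s with
  | zero =>
      rw [Finset.sum_eq_single 0]
      · simp
      · intro l _ hl0
        exact Nat.choose_eq_zero_of_lt (by omega)
      · simp
  | succ t =>
      induction n with
      | zero => simp
      | succ n ih =>
          rw [Finset.sum_range_succ, ih]
          have h1 : t + 1 + (n + 1) - 1 = t + n + 1 := by omega
          have h2 : t + 1 + n = t + n + 1 := by omega
          rw [h1, h2, show t + 1 + (n + 1) = (t + n + 1) + 1 by omega,
            Nat.choose_succ_succ' (t + n + 1) n]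

lemma negBinom_conv (s n : ℕ) :
    ∑ l ∈ range (n + 1), negBinom s l * negBinom 1 (n - l) = negBinom (s + 1) n := by
  have h : ∀ l ∈ range (n + 1),
      negBinom s l * negBinom 1 (n - l) = (-1) ^ n * ((s + l - 1).choose l : ℤ) := by
    intro l hl
    have hln : l ≤ n := by have := mem_range.mp hl; omega
    rw [negBinom_one, negBinom]
    have : (-1 : ℤ) ^ l * (-1) ^ (n - l) = (-1) ^ n := by
      rw [← pow_add]; congr 1; omega
    calc (-1 : ℤ) ^ l * ((s + l - 1).choose l : ℤ) * (-1) ^ (n - l)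
        = ((-1 : ℤ) ^ l * (-1) ^ (n - l)) * ((s + l - 1).choose l : ℤ) := by ring
      _ = (-1) ^ n * ((s + l - 1).choose l : ℤ) := by rw [this]
  rw [Finset.sum_congr rfl h, ← Finset.mul_sum]
  have : ∑ l ∈ range (n + 1), ((s + l - 1).choose l : ℤ) = ((s + n).choose n : ℤ) := by
    exact_mod_cast congrArg Nat.cast (choose_hockey s n)
  rw [this, negBinom, show s + 1 + n - 1 = s + n by omega]

variable {p : ℕ} [Fact p.Prime]

lemma negBinom_norm_summable (s : ℕ) {x : ℚ_[p]} (hx : ‖x‖ < 1) :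
    Summable fun l : ℕ => ‖(negBinom s l : ℚ_[p]) * x ^ l‖ := by
  refine Summable.of_nonneg_of_le (fun l => norm_nonneg _) (fun l => ?_)
    (summable_geometric_of_lt_one (norm_nonneg x) hx)
  rw [norm_mul, norm_pow]
  calc ‖((negBinom s l : ℤ) : ℚ_[p])‖ * ‖x‖ ^ l
      ≤ 1 * ‖x‖ ^ l := by
        gcongr
        exact Padic.norm_int_le_one _
    _ = ‖x‖ ^ l := one_mul _

lemma binom_tsum (s : ℕ) {x : ℚ_[p]} (hx : ‖x‖ < 1) :
    ∑' l : ℕ, (negBinom s l : ℚ_[p]) * x ^ l = ((1 + x) ^ s)⁻¹ := by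
  induction s with
  | zero =>
      rw [pow_zero, inv_one, tsum_eq_single 0]
      · simp [negBinom]
      · intro l hl
        rcases Nat.exists_eq_succ_of_ne_zero hl with ⟨m, rfl⟩
        have : negBinom 0 (m + 1) = 0 := by
          simp [negBinom, Nat.choose_eq_zero_of_lt (by omega : 0 + (m + 1) - 1 < m + 1)]
        simp [this]
  | succ s ih =>
      have h1 : ∑' l : ℕ, (negBinom 1 l : ℚ_[p]) * x ^ l = (1 + x)⁻¹ := by
        have he : ∀ l : ℕ, (negBinom 1 l : ℚ_[p]) * x ^ l = (-x) ^ l := by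
          intro l; rw [negBinom_one]; push_cast; rw [neg_pow]; ring
        rw [tsum_congr he, tsum_geometric_of_norm_lt_one (by simpa using hx), sub_neg_eq_add]
      have key := tsum_mul_tsum_eq_tsum_sum_range_of_summable_norm
        (negBinom_norm_summable s hx) (negBinom_norm_summable 1 hx)
      rw [ih, h1] at key
      rw [pow_succ, mul_inv, key]
      refine tsum_congr fun n => ?_
      have h2 : ∀ l ∈ range (n + 1),
          (negBinom s l : ℚ_[p]) * x ^ l * ((negBinom 1 (n - l) : ℚ_[p]) * x ^ (n - l))
            = ((negBinom s l * negBinom 1 (n - l) : ℤ) : ℚ_[p]) * x ^ n := by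
        intro l hl
        have hln : l ≤ n := by have := mem_range.mp hl; omega
        push_cast
        rw [show x ^ n = x ^ l * x ^ (n - l) by rw [← pow_add]; congr 1; omega]
        ring
      rw [Finset.sum_congr rfl h2, ← Finset.sum_mul, ← Int.cast_sum, negBinom_conv]

lemma prod_tsum : ∀ {n : ℕ} (f : Fin n → ℕ → ℚ_[p]),
    (∀ i, Summable fun l => ‖f i l‖) →
    Summable (fun l : Fin n → ℕ => ‖∏ i, f i (l i)‖) ∧
      ∏ i, ∑' l : ℕ, f i l = ∑' l : Fin n → ℕ, ∏ i, f i (l i) := by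
  intro n
  induction n with
  | zero =>
      intro f _
      constructor
      · exact .of_finite
      · simp
  | succ n ih =>
      intro f hf
      obtain ⟨ihs, ihe⟩ := ih (fun i => f i.succ) (fun i => hf i.succ)
      let e : ℕ × (Fin n → ℕ) ≃ (Fin (n + 1) → ℕ) := Fin.consEquiv fun _ => ℕ
      have hprod : ∀ z : ℕ × (Fin n → ℕ),
          (∏ i, f i (e z i)) = f 0 z.1 * ∏ i, f i.succ (z.2 i) := by
        intro z
        rw [Fin.prod_univ_succ]
        simp [e, Fin.consEquiv]
      constructor
      · refine e.summable_iff.mp (((hf 0).mul_norm ihs).congr fun z => ?_)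
        exact (congrArg norm (hprod z)).symm
      · rw [Fin.prod_univ_succ, ihe,
          tsum_mul_tsum_of_summable_norm (hf 0) ihs, ← e.tsum_eq]
        exact tsum_congr fun z => (hprod z).symm

lemma norm_frac_lt_one (a m : ℤ) (k : ℕ) (hm : 0 < m) (hm2 : m < (p : ℤ) ^ k) :
    ‖(a : ℚ_[p]) * (p : ℚ_[p]) ^ k / (m : ℚ_[p])‖ < 1 := by
  have hk0 : 0 < (p : ℝ) := by exact_mod_cast (Fact.out : p.Prime).pos
  have hmne : (m : ℚ_[p]) ≠ 0 := Int.cast_ne_zero.mpr (by omega)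
  have hnorm_m : (p : ℝ) ^ (-(k : ℤ)) < ‖(m : ℚ_[p])‖ := by
    by_contra h
    push_neg at h
    have := (Padic.norm_int_le_pow_iff_dvd m k).mp h
    have := Int.le_of_dvd hm this
    omega
  have h1 : ‖(a : ℚ_[p]) * (p : ℚ_[p]) ^ k / (m : ℚ_[p])‖
      = ‖(a : ℚ_[p])‖ * ‖(p : ℚ_[p]) ^ k‖ / ‖(m : ℚ_[p])‖ := by
    rw [norm_div, norm_mul]
  rw [h1, div_lt_one (norm_pos_iff.mpr hmne)]
  have h2 : ‖(p : ℚ_[p]) ^ k‖ = (p : ℝ) ^ (-(k : ℤ)) := by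
    rw [norm_pow, Padic.norm_p, inv_pow, zpow_neg, zpow_natCast]
  calc ‖(a : ℚ_[p])‖ * ‖(p : ℚ_[p]) ^ k‖ ≤ 1 * ‖(p : ℚ_[p]) ^ k‖ := by
        gcongr; exact Padic.norm_int_le_one _
    _ = (p : ℝ) ^ (-(k : ℤ)) := by rw [one_mul, h2]
    _ < ‖(m : ℚ_[p])‖ := hnorm_m

lemma factor_tsum (a m : ℤ) (k : ℕ) (hm : 0 < m) (hm2 : m < (p : ℤ) ^ k) (s : ℕ) :
    Summable (fun l : ℕ => ‖(negBinom s l : ℚ_[p]) * (a : ℚ_[p]) ^ l *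
        ((p : ℚ_[p]) ^ k) ^ (s + l) * (((m : ℚ_[p]) ^ (s + l))⁻¹)‖) ∧
      ∑' l : ℕ, (negBinom s l : ℚ_[p]) * (a : ℚ_[p]) ^ l *
          ((p : ℚ_[p]) ^ k) ^ (s + l) * ((m : ℚ_[p]) ^ (s + l))⁻¹
        = ((p : ℚ_[p]) ^ k) ^ s * (((m : ℚ_[p]) + (a : ℚ_[p]) * (p : ℚ_[p]) ^ k) ^ s)⁻¹ := by
  set π : ℚ_[p] := (p : ℚ_[p]) ^ k with hπ
  set c : ℚ_[p] := (m : ℚ_[p]) with hc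
  set x : ℚ_[p] := (a : ℚ_[p]) * π / c with hx
  have hπne : π ≠ 0 := pow_ne_zero _ (Nat.cast_ne_zero.mpr (Fact.out : p.Prime).pos.ne')
  have hcne : c ≠ 0 := Int.cast_ne_zero.mpr (by omega)
  have hxlt : ‖x‖ < 1 := norm_frac_lt_one a m k hm hm2
  have hsum : c + (a : ℚ_[p]) * π ≠ 0 := by
    have hP : (0 : ℤ) < (p : ℤ) ^ k :=
      pow_pos (by exact_mod_cast (Fact.out : p.Prime).pos) k
    have hint : m + a * (p : ℤ) ^ k ≠ 0 := by
      intro h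
      rcases le_or_gt a (-1) with h' | h'
      · have h2 : a * (p : ℤ) ^ k ≤ -1 * (p : ℤ) ^ k :=
          mul_le_mul_of_nonneg_right h' hP.le
        linarith
      · have h2 : 0 ≤ a * (p : ℤ) ^ k := mul_nonneg (by omega) hP.le
        linarith
    have := (Int.cast_ne_zero (α := ℚ_[p])).mpr hint
    push_cast at this
    convert this using 2 <;> simp [hc, hπ]
  have h1x : 1 + x = (c + (a : ℚ_[p]) * π) / c := by
    rw [hx]
    field_simp
  have hterm : ∀ l : ℕ, (negBinom s l : ℚ_[p]) * (a : ℚ_[p]) ^ l * π ^ (s + l) * (c ^ (s + l))⁻¹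
      = (π ^ s * (c ^ s)⁻¹) * ((negBinom s l : ℚ_[p]) * x ^ l) := by
    intro l
    rw [hx, pow_add, pow_add, div_pow, mul_pow]
    field_simp
  constructor
  · refine (((negBinom_norm_summable s hxlt).mul_left ‖π ^ s * (c ^ s)⁻¹‖).congr fun l => ?_)
    rw [← norm_mul, ← hterm l]
  · rw [tsum_congr hterm, tsum_mul_left, binom_tsum s hxlt, h1x, div_pow, inv_div]
    field_simp

theorem zetaf_translation (p : ℕ) [Fact p.Prime] (a : ℤ) (k d : ℕ) (hk : 1 ≤ k) (hd : 1 ≤ d)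
    (s : Fin d → ℕ) (hs : ∀ i, 1 ≤ s i) :
    Summable (fun l : Fin d → ℕ =>
        (∏ i, (negBinom (s i) (l i) : ℚ_[p]) * (a : ℚ_[p]) ^ (l i)) *
          zetaf p k 0 (fun i => s i + l i)) ∧
    zetaf p k a s
      = ∑' l : Fin d → ℕ,
          (∏ i, (negBinom (s i) (l i) : ℚ_[p]) * (a : ℚ_[p]) ^ (l i)) *
            zetaf p k 0 (fun i => s i + l i) := by
  set P : ℤ := (p : ℤ) ^ k with hP
  set π : ℚ_[p] := (p : ℚ_[p]) ^ k with hπ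
  have hπcast : ((P : ℤ) : ℚ_[p]) = π := by push_cast [hP, hπ]; ring
  set S0 : Finset (Fin d → ℤ) :=
    (Fintype.piFinset fun _ : Fin d => Finset.Ioo (0 : ℤ) P).filter
      (fun n => ∀ i j : Fin d, i < j → n i < n j) with hS0
  -- zetaf at a = 0
  have hzeta0 : ∀ t : Fin d → ℕ,
      zetaf p k 0 t = π ^ (∑ i, t i) * ∑ m ∈ S0, ∏ i, ((m i : ℚ_[p]) ^ t i)⁻¹ := by
    intro t
    simp only [zetaf, mhs, zero_mul, zero_add, one_mul, one_div, hS0, hπ, hP]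
  -- reindexing
  have hreindex : mhs p (a * P) ((a + 1) * P) s
      = ∑ m ∈ S0, ∏ i, (((m i : ℚ_[p]) + (a : ℚ_[p]) * π) ^ s i)⁻¹ := by
    rw [mhs]
    have hexp : (a + 1) * P = a * P + P := by ring
    refine Finset.sum_nbij' (fun n => fun j => n j - a * P) (fun m => fun j => m j + a * P)
      ?_ ?_ ?_ ?_ ?_
    · intro n hn
      simp only [hS0, Finset.mem_filter, Fintype.mem_piFinset, Finset.mem_Ioo] at hn ⊢
      refine ⟨fun i => ?_, fun i j hij => ?_⟩
      · have h := hn.1 i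
        exact ⟨by linarith [h.1], by linarith [h.2]⟩
      · have := hn.2 i j hij
        exact sub_lt_sub_right this _
    · intro m hm
      simp only [hS0, Finset.mem_filter, Fintype.mem_piFinset, Finset.mem_Ioo] at hm ⊢
      refine ⟨fun i => ?_, fun i j hij => ?_⟩
      · have h := hm.1 i
        exact ⟨by linarith [h.1], by linarith [h.2]⟩
      · have := hm.2 i j hij
        exact add_lt_add_left this _
    · intro n _; funext j; ring
    · intro m _; funext j; ring
    · intro n _
      refine Finset.prod_congr rfl fun i _ => ?_
      rw [one_div]
      congr 2
      push_cast
      rw [hπcast]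
      ring
  -- the summand functions
  set F : (Fin d → ℤ) → (Fin d → ℕ) → ℚ_[p] := fun m l =>
    ∏ i, ((negBinom (s i) (l i) : ℚ_[p]) * (a : ℚ_[p]) ^ (l i) * π ^ (s i + l i) *
      ((m i : ℚ_[p]) ^ (s i + l i))⁻¹) with hF
  have hmem : ∀ m ∈ S0, ∀ i, 0 < m i ∧ m i < P := by
    intro m hm i
    simp only [hS0, Finset.mem_filter, Fintype.mem_piFinset, Finset.mem_Ioo] at hm
    exact hm.1 i
  -- per-m expansion
  have hFm : ∀ m ∈ S0,
      Summable (fun l : Fin d → ℕ => ‖F m l‖) ∧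
        π ^ (∑ i, s i) * ∏ i, (((m i : ℚ_[p]) + (a : ℚ_[p]) * π) ^ s i)⁻¹ = ∑' l, F m l := by
    intro m hm
    have hfac := fun i => factor_tsum (p := p) a (m i) k (hmem m hm i).1 (hmem m hm i).2 (s i)
    obtain ⟨hsum, heq⟩ := prod_tsum (p := p)
      (fun i l => (negBinom (s i) l : ℚ_[p]) * (a : ℚ_[p]) ^ l * π ^ (s i + l) *
        ((m i : ℚ_[p]) ^ (s i + l))⁻¹)
      (fun i => (hfac i).1)
    refine ⟨hsum, ?_⟩
    simp only [hF]
    rw [← heq]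
    have hprodeq : (∏ i, ∑' l : ℕ, ((negBinom (s i) l : ℚ_[p]) * (a : ℚ_[p]) ^ l *
          π ^ (s i + l) * ((m i : ℚ_[p]) ^ (s i + l))⁻¹))
        = ∏ i, (π ^ s i * (((m i : ℚ_[p]) + (a : ℚ_[p]) * π) ^ s i)⁻¹) := by
      refine Finset.prod_congr rfl fun i _ => ?_
      rw [hπ]
      exact (hfac i).2
    rw [hprodeq, Finset.prod_mul_distrib, Finset.prod_pow_eq_pow_sum]
  -- sum over m of F m l
  have hsumF : ∀ l : Fin d → ℕ,
      (∑ m ∈ S0, F m l)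
        = (∏ i, (negBinom (s i) (l i) : ℚ_[p]) * (a : ℚ_[p]) ^ (l i)) *
            zetaf p k 0 (fun i => s i + l i) := by
    intro l
    rw [hzeta0 (fun i => s i + l i), ← mul_assoc, Finset.mul_sum]
    refine Finset.sum_congr rfl fun m hm => ?_
    simp only [hF]
    calc ∏ i, ((negBinom (s i) (l i) : ℚ_[p]) * (a : ℚ_[p]) ^ (l i) * π ^ (s i + l i) *
          ((m i : ℚ_[p]) ^ (s i + l i))⁻¹)
        = (∏ i, (negBinom (s i) (l i) : ℚ_[p]) * (a : ℚ_[p]) ^ (l i)) *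
            (∏ i, π ^ (s i + l i)) * ∏ i, ((m i : ℚ_[p]) ^ (s i + l i))⁻¹ := by
          rw [← Finset.prod_mul_distrib, ← Finset.prod_mul_distrib]
      _ = (∏ i, (negBinom (s i) (l i) : ℚ_[p]) * (a : ℚ_[p]) ^ (l i)) *
            π ^ (∑ i, (s i + l i)) * ∏ i, ((m i : ℚ_[p]) ^ (s i + l i))⁻¹ := by
          rw [Finset.prod_pow_eq_pow_sum]
      _ = _ := by ring
  -- summability of each F m
  have hFsummable : ∀ m ∈ S0, Summable (F m) := fun m hm => ((hFm m hm).1).of_norm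
  have hmain : zetaf p k a s = ∑' l : Fin d → ℕ, ∑ m ∈ S0, F m l := by
    rw [zetaf, ← hP, ← hπ, hreindex, Finset.mul_sum]
    rw [Finset.sum_congr rfl fun m hm => (hFm m hm).2]
    exact (Summable.tsum_finsetSum hFsummable).symm
  constructor
  · refine (summable_sum hFsummable).congr fun l => hsumF l
  · rw [hmain]
    exact tsum_congr hsumF
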